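/- Suppose the pair (v, w) is feasible for the outer LP, i.e.: (i) ∂v/∂t(t,x) + y·∇ₓv(t,x) ≤ 0 for all t ∈ [0,T], x ∈ X, y ∈ F(x); (ii) w(x) ≥ v(0,x) + 1 for all x ∈ X; (iii) v(T,x) ≥ 0 for all x ∈ X_T; (iv) w(x) ≥ 0 for all x ∈ X. Then X₀ ⊆ {x ∈ X : v(0,x) ≥ 0} ⊆ {x ∈ X : w(x) ≥ 1}; in particular the set {x ∈ X : w(x) ≥ 1} is an outer approximation of the data-driven region of attraction X₀. -/

import Mathlib

/-- An admissible trajectory from `x₀` on `[0,T]`: a differentiable function with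
`x(0) = x₀` and `ẋ(t) ∈ F(x(t))` for all `t ∈ [0,T]`, where
`F(x) = ⋂ᵢ {y : ‖y − yᵢ‖ ≤ M‖x − xᵢ‖}`. -/
def IsAdmissible {n N : ℕ} (M T : ℝ) (xd yd : Fin N → EuclideanSpace ℝ (Fin n))
    (x₀ : EuclideanSpace ℝ (Fin n)) (traj : ℝ → EuclideanSpace ℝ (Fin n)) : Prop :=
  traj 0 = x₀ ∧
  ∃ traj' : ℝ → EuclideanSpace ℝ (Fin n),
    (∀ t ∈ Set.Icc (0 : ℝ) T, HasDerivAt traj (traj' t) t) ∧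
    (∀ t ∈ Set.Icc (0 : ℝ) T, ∀ i : Fin N, ‖traj' t - yd i‖ ≤ M * ‖traj t - xd i‖)

/-- The data-driven region of attraction `X₀`. -/
def dataROA {n N : ℕ} (M T : ℝ) (xd yd : Fin N → EuclideanSpace ℝ (Fin n))
    (X XT : Set (EuclideanSpace ℝ (Fin n))) : Set (EuclideanSpace ℝ (Fin n)) :=
  {x₀ ∈ X | ∃ traj : ℝ → EuclideanSpace ℝ (Fin n),
    IsAdmissible M T xd yd x₀ traj ∧
    (∀ t ∈ Set.Icc (0 : ℝ) T, traj t ∈ X) ∧ traj T ∈ XT}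

/-- if `(v,w)` is feasible for the outer LP, then
`X₀ ⊆ {x ∈ X : v(0,x) ≥ 0} ⊆ {x ∈ X : w(x) ≥ 1}`. -/
theorem outer_LP_gives_outer_approximation (n N : ℕ) (hn : 0 < n) (hN : 0 < N)
    (M T : ℝ) (hM : 0 < M) (hT : 0 < T)
    (xd yd : Fin N → EuclideanSpace ℝ (Fin n))
    (X XT : Set (EuclideanSpace ℝ (Fin n)))
    (hX : IsCompact X) (hXT : IsCompact XT) (hsub : XT ⊆ X)
    (v : ℝ × EuclideanSpace ℝ (Fin n) → ℝ) (hv : ContDiff ℝ 1 v)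
    (w : EuclideanSpace ℝ (Fin n) → ℝ) (hw : Continuous w)
    -- (i) Lie derivative constraint
    (hLie : ∀ t ∈ Set.Icc (0 : ℝ) T, ∀ x ∈ X, ∀ y : EuclideanSpace ℝ (Fin n),
      (∀ i : Fin N, ‖y - yd i‖ ≤ M * ‖x - xd i‖) →
      fderiv ℝ v (t, x) (1, y) ≤ 0)
    -- (ii)
    (hwv : ∀ x ∈ X, w x ≥ v (0, x) + 1)
    -- (iii)
    (hvT : ∀ x ∈ XT, v (T, x) ≥ 0)
    -- (iv)
    (hw0 : ∀ x ∈ X, w x ≥ 0) :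
    dataROA M T xd yd X XT ⊆ {x ∈ X | v (0, x) ≥ 0} ∧
    {x ∈ X | v (0, x) ≥ 0} ⊆ {x ∈ X | w x ≥ 1} := by
  constructor
  · rintro x₀ ⟨hx₀X, traj, ⟨h0, traj', hderiv, hF⟩, hXmem, hTmem⟩
    refine ⟨hx₀X, ?_⟩
    set g : ℝ → ℝ := fun t => v (t, traj t) with hg
    have hgderiv : ∀ t ∈ Set.Icc (0 : ℝ) T,
        HasDerivAt g (fderiv ℝ v (t, traj t) (1, traj' t)) t := by
      intro t ht
      have hφ : HasDerivAt (fun s => ((s : ℝ), traj s)) (1, traj' t) t :=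
        HasDerivAt.prodMk (hasDerivAt_id t) (hderiv t ht)
      have hfd : HasFDerivAt v (fderiv ℝ v (t, traj t)) (t, traj t) :=
        (hv.differentiable one_ne_zero (t, traj t)).hasFDerivAt
      exact hfd.comp_hasDerivAt t hφ
    have hanti : AntitoneOn g (Set.Icc 0 T) := by
      apply antitoneOn_of_deriv_nonpos (convex_Icc 0 T)
      · exact fun t ht => (hgderiv t ht).continuousAt.continuousWithinAt
      · intro t ht
        rw [interior_Icc] at ht
        exact (hgderiv t (Set.Ioo_subset_Icc_self ht)).differentiableAt.differentiableWithinAt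
      · intro t ht
        rw [interior_Icc] at ht
        have ht' : t ∈ Set.Icc (0 : ℝ) T := Set.Ioo_subset_Icc_self ht
        rw [(hgderiv t ht').deriv]
        exact hLie t ht' (traj t) (hXmem t ht') (traj' t) (hF t ht')
    have h1 : g T ≤ g 0 :=
      hanti (Set.left_mem_Icc.2 hT.le) (Set.right_mem_Icc.2 hT.le) hT.le
    have h2 : (0 : ℝ) ≤ g T := hvT _ hTmem
    show (0 : ℝ) ≤ v (0, x₀)
    have : g 0 = v (0, x₀) := by rw [hg]; simp [h0]
    linarith [this ▸ (le_trans h2 h1)]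
  · rintro x ⟨hxX, hvx⟩
    exact ⟨hxX, by have := hwv x hxX; linarith⟩
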